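/- In the setting of a maximal totally degenerate subspace Π (dimension r = min(p,q)) of a vector space V with nondegenerate symmetric bilinear form of signature (p,q), let Π_T = span{k_1^∥,…,k_r^∥} ⊕ span{k_1^⊥,…,k_r^⊥}. Then a vector v ∈ V is orthogonal to Π if and only if there exists v̄ ∈ Π_T⊥ such that v − v̄ ∈ Π. -/

import Mathlib

lemma symm_range_of_ker_orth {n : ℕ}
    (φ : EuclideanSpace ℝ (Fin n) →ₗ[ℝ] EuclideanSpace ℝ (Fin n))
    (hφ : ∀ x y, (inner ℝ (φ x) y : ℝ) = inner ℝ x (φ y))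
    (r : EuclideanSpace ℝ (Fin n))
    (hr : ∀ a, φ a = 0 → (inner ℝ a r : ℝ) = 0) :
    r ∈ LinearMap.range φ := by
  have hle : LinearMap.range φ ≤ (LinearMap.ker φ)ᗮ := by
    rintro _ ⟨x, rfl⟩
    rw [Submodule.mem_orthogonal]
    intro z hz
    rw [real_inner_comm, hφ, LinearMap.mem_ker.mp hz]
    simp
  have h1 := LinearMap.finrank_range_add_finrank_ker φ
  have h2 := Submodule.finrank_add_finrank_orthogonal (K := LinearMap.ker φ)
  have hdim : Module.finrank ℝ (LinearMap.range φ)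
      = Module.finrank ℝ ((LinearMap.ker φ)ᗮ) := by omega
  rw [Submodule.eq_of_le_of_finrank_eq hle hdim, Submodule.mem_orthogonal]
  exact hr

/-- Lemma B.2 (iv): with Π_T = span{k_i^∥} ⊕ span{k_i^⊥}, a vector v is orthogonal to the
maximal totally degenerate subspace Π = span{k_i} if and only if there is v̄ orthogonal to
Π_T with v − v̄ ∈ Π. -/
theorem orthogonal_to_degenerate_iff
    (p q : ℕ) (hpq : p ≤ q) (V : Type*) [AddCommGroup V] [Module ℝ V]
    (B : V →ₗ[ℝ] V →ₗ[ℝ] ℝ)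
    (b : Module.Basis (Fin p ⊕ Fin q) ℝ V)
    (hb : ∀ i j, B (b i) (b j) =
      if i = j then Sum.elim (fun _ => (-1 : ℝ)) (fun _ => (1 : ℝ)) i else 0)
    (k : Fin p → V) (hk : LinearIndependent ℝ k)
    (hdeg : ∀ i j, B (k i) (k j) = 0)
    (T : Submodule ℝ V) (hT : Module.finrank ℝ T = p)
    (hneg : ∀ v ∈ T, v ≠ 0 → B v v < 0)
    (kpar kperp : Fin p → V)
    (hpar : ∀ i, kpar i ∈ T)
    (hperp : ∀ i, ∀ t ∈ T, B t (kperp i) = 0)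
    (hsum : ∀ i, k i = kpar i + kperp i) :
    ∀ v : V,
      (∀ u ∈ Submodule.span ℝ (Set.range k), B u v = 0) ↔
      (∃ vb : V,
        (∀ u ∈ Submodule.span ℝ (Set.range kpar) ⊔ Submodule.span ℝ (Set.range kperp),
          B u vb = 0) ∧
        v - vb ∈ Submodule.span ℝ (Set.range k)) := by
  intro v
  -- symmetry of B
  have hBsymm : ∀ x y : V, B x y = B y x := by
    have hflip : B = B.flip := by
      apply b.ext; intro i; apply b.ext; intro j
      rw [LinearMap.flip_apply, hb, hb]
      rcases eq_or_ne i j with rfl | h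
      · simp
      · simp [h, Ne.symm h]
    intro x y
    conv_lhs => rw [hflip]
    rfl
  -- B(k i, y) = 0 for y in span k
  have h1 : ∀ i, ∀ y ∈ Submodule.span ℝ (Set.range k), B (k i) y = 0 := by
    intro i y hy
    have : Submodule.span ℝ (Set.range k) ≤ LinearMap.ker (B (k i)) := by
      rw [Submodule.span_le]
      rintro _ ⟨j, rfl⟩
      exact hdeg i j
    exact this hy
  have hdegspan : ∀ x ∈ Submodule.span ℝ (Set.range k),
      ∀ y ∈ Submodule.span ℝ (Set.range k), B x y = 0 := by
    intro x hx y hy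
    have : Submodule.span ℝ (Set.range k) ≤ LinearMap.ker (B.flip y) := by
      rw [Submodule.span_le]
      rintro _ ⟨i, rfl⟩
      exact h1 i y hy
    exact this hx
  have hkle : Submodule.span ℝ (Set.range k) ≤
      Submodule.span ℝ (Set.range kpar) ⊔ Submodule.span ℝ (Set.range kperp) := by
    rw [Submodule.span_le]
    rintro _ ⟨i, rfl⟩
    rw [hsum i]
    exact add_mem
      (le_sup_left (a := Submodule.span ℝ (Set.range kpar))
        (Submodule.subset_span ⟨i, rfl⟩))
      (le_sup_right (b := Submodule.span ℝ (Set.range kperp))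
        (Submodule.subset_span ⟨i, rfl⟩))
  constructor
  · -- forward direction
    intro hv
    -- the sum map
    set s : (Fin p → ℝ) → V := fun c => ∑ j, c j • kpar j with hs
    have hsT : ∀ c, s c ∈ T := fun c =>
      Submodule.sum_mem _ fun j _ => Submodule.smul_mem _ _ (hpar j)
    have hBs : ∀ c (x : V), B (s c) x = ∑ j, c j * B (kpar j) x := by
      intro c x
      simp [hs, Finset.sum_apply, map_sum]
    -- the Gram operator
    set φ : EuclideanSpace ℝ (Fin p) →ₗ[ℝ] EuclideanSpace ℝ (Fin p) :=
      { toFun := fun c => WithLp.toLp 2 (fun i => B (kpar i) (s c))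
        map_add' := by
          intro a c
          ext i
          simp [hs, add_smul, Finset.sum_add_distrib]
        map_smul' := by
          intro m c
          ext i
          simp [hs, Finset.smul_sum, smul_smul, Finset.mul_sum, mul_assoc] } with hφdef
    have hφapp : ∀ c i, φ c i = B (kpar i) (s c) := fun c i => rfl
    have hinner : ∀ z w : EuclideanSpace ℝ (Fin p), (inner ℝ z w : ℝ) = ∑ i, z i * w i := by
      intro z w
      simp [PiLp.inner_apply, mul_comm]
    have hφsymm : ∀ x y : EuclideanSpace ℝ (Fin p),
        (inner ℝ (φ x) y : ℝ) = inner ℝ x (φ y) := by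
      intro x y
      have hx : (inner ℝ (φ x) y : ℝ) = B (s y) (s x) := by
        rw [hinner, hBs]
        exact Finset.sum_congr rfl fun i _ => mul_comm (φ x i) (y i)
      have hy : (inner ℝ x (φ y) : ℝ) = B (s x) (s y) := by
        rw [hinner, hBs]
        exact Finset.sum_congr rfl fun i _ => rfl
      rw [hx, hy, hBsymm]
    set r : EuclideanSpace ℝ (Fin p) := WithLp.toLp 2 (fun i => B (kpar i) v) with hrdef
    have hr : ∀ a, φ a = 0 → (inner ℝ a r : ℝ) = 0 := by
      intro a ha
      have hzero : ∀ i, B (kpar i) (s a) = 0 := fun i => congrArg (fun x : EuclideanSpace ℝ (Fin p) => x i) ha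
      have hsa : B (s a) (s a) = 0 := by
        rw [hBs]
        simp [hzero]
      have hsa0 : s a = 0 := by
        by_contra h
        exact absurd hsa (ne_of_lt (hneg _ (hsT a) h))
      have : (inner ℝ a r : ℝ) = B (s a) v := by
        rw [hinner, hBs]
      rw [this, hsa0]
      simp
    obtain ⟨c, hc⟩ := symm_range_of_ker_orth φ hφsymm r hr
    refine ⟨v - ∑ j, c j • k j, ?_, ?_⟩
    · -- orthogonality to Π_T
      have hck : ∀ i, B (k i) (v - ∑ j, c j • k j) = 0 := by
        intro i
        rw [map_sub, map_sum]
        have h0 : B (k i) v = 0 :=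
          hBsymm (k i) v ▸ hv (k i) (Submodule.subset_span ⟨i, rfl⟩)
        simp [h0, hdeg]
      have hcpar : ∀ i, B (kpar i) (v - ∑ j, c j • k j) = 0 := by
        intro i
        rw [map_sub, map_sum]
        have hkj : ∀ j, B (kpar i) (k j) = B (kpar i) (kpar j) := by
          intro j
          rw [hsum j, map_add, hperp j (kpar i) (hpar i), add_zero]
        have hri : B (kpar i) v = B (kpar i) (s c) := (congrArg (fun x : EuclideanSpace ℝ (Fin p) => x i) hc).symm
        rw [hri, hs]
        simp [hkj, map_sum]
      have hcperp : ∀ i, B (kperp i) (v - ∑ j, c j • k j) = 0 := by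
        intro i
        have := hck i
        rw [hsum i, map_add, LinearMap.add_apply, hcpar i, zero_add] at this
        exact this
      intro u hu
      have hle2 : Submodule.span ℝ (Set.range kpar) ⊔ Submodule.span ℝ (Set.range kperp)
          ≤ LinearMap.ker (B.flip (v - ∑ j, c j • k j)) := by
        apply sup_le
        · rw [Submodule.span_le]; rintro _ ⟨i, rfl⟩; exact hcpar i
        · rw [Submodule.span_le]; rintro _ ⟨i, rfl⟩; exact hcperp i
      exact hle2 hu
    · have : v - (v - ∑ j, c j • k j) = ∑ j, c j • k j := by abel
      rw [this]
      exact Submodule.sum_mem _ fun j _ =>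
        Submodule.smul_mem _ _ (Submodule.subset_span ⟨j, rfl⟩)
  · -- easy direction
    rintro ⟨vb, hvb, hdiff⟩ u hu
    have : v = vb + (v - vb) := by abel
    rw [this, map_add]
    rw [hvb u (hkle hu), hdegspan u hu _ hdiff, add_zero]
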